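/- arXiv:1408.0308 — 2 statements merged into one kernel-verified Lean document; each statement's English description precedes it below -/
import Mathlib

section
/- Let A be a row-stochastic n×n matrix having a column k with all entries at least δ > 0. Then for any x ∈ ℝ^n, the spread of Ax satisfies max_i (Ax)_i - min_i (Ax)_i ≤ (1-δ)(max_i x_i - min_i x_i). -/
def RowStochastic {n : ℕ} (A : Matrix (Fin n) (Fin n) ℝ) : Prop :=
  (∀ i j, 0 ≤ A i j) ∧ ∀ i, ∑ j, A i j = 1

theorem stmt_9 {n : ℕ} (hne : (Finset.univ : Finset (Fin n)).Nonempty)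
    (A : Matrix (Fin n) (Fin n) ℝ) (hA : RowStochastic A)
    (δ : ℝ) (hδ : 0 < δ) (k : Fin n) (hcol : ∀ i, δ ≤ A i k)
    (x : Fin n → ℝ) :
    Finset.univ.sup' hne (A.mulVec x) - Finset.univ.inf' hne (A.mulVec x) ≤
      (1 - δ) * (Finset.univ.sup' hne x - Finset.univ.inf' hne x) := by
  obtain ⟨hpos, hrow⟩ := hA
  set M := Finset.univ.sup' hne x with hMdef
  set m := Finset.univ.inf' hne x with hmdef
  -- auxiliary coefficient
  set e : Fin n → ℝ := fun j => if j = k then δ else 0 with he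
  have henn : ∀ i j, 0 ≤ A i j - e j := by
    intro i j
    by_cases h : j = k
    · subst h; simp [he]; linarith [hcol i]
    · simp [he, h, hpos i j]
  have hesum : ∀ i, ∑ j, (A i j - e j) = 1 - δ := by
    intro i
    rw [Finset.sum_sub_distrib, hrow i, he]
    simp
  have hsplit : ∀ i, A.mulVec x i = δ * x k + ∑ j, (A i j - e j) * x j := by
    intro i
    have h0 : ∑ j, e j * x j = δ * x k := by
      rw [he]; simp [Finset.sum_ite_eq' Finset.univ k (fun j => δ * x j)]
    rw [Matrix.mulVec, dotProduct]
    have h1 : ∑ j, A i j * x j = ∑ j, (e j * x j + (A i j - e j) * x j) := by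
      congr 1; funext j; ring
    rw [h1, Finset.sum_add_distrib, h0]
  have hupper : ∀ i, A.mulVec x i ≤ δ * x k + (1 - δ) * M := by
    intro i
    rw [hsplit i]
    have : ∑ j, (A i j - e j) * x j ≤ ∑ j, (A i j - e j) * M := by
      apply Finset.sum_le_sum
      intro j _
      exact mul_le_mul_of_nonneg_left (Finset.le_sup' x (Finset.mem_univ j)) (henn i j)
    rw [← Finset.sum_mul, hesum i] at this
    linarith
  have hlower : ∀ i, δ * x k + (1 - δ) * m ≤ A.mulVec x i := by
    intro i
    rw [hsplit i]
    have : ∑ j, (A i j - e j) * m ≤ ∑ j, (A i j - e j) * x j := by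
      apply Finset.sum_le_sum
      intro j _
      exact mul_le_mul_of_nonneg_left (Finset.inf'_le x (Finset.mem_univ j)) (henn i j)
    rw [← Finset.sum_mul, hesum i] at this
    linarith
  have h1 : Finset.univ.sup' hne (A.mulVec x) ≤ δ * x k + (1 - δ) * M :=
    Finset.sup'_le hne _ fun i _ => hupper i
  have h2 : δ * x k + (1 - δ) * m ≤ Finset.univ.inf' hne (A.mulVec x) :=
    Finset.le_inf' hne _ fun i _ => hlower i
  linarith
end

section
/- If A is row-stochastic and for some t₀ the power A^{t₀} has a strictly positive column, then for every initial opinion vector x(0), the sequence x(t) = A^t x(0) converges, and its limit is a consensus vector (all entries equal). -/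
open Filter

lemma rs_mul {n : ℕ} {A B : Matrix (Fin n) (Fin n) ℝ} (hA : RowStochastic A)
    (hB : RowStochastic B) : RowStochastic (A * B) := by
  constructor
  · intro i j
    simp only [Matrix.mul_apply]
    exact Finset.sum_nonneg fun l _ => mul_nonneg (hA.1 i l) (hB.1 l j)
  · intro i
    simp only [Matrix.mul_apply]
    rw [Finset.sum_comm]
    simp_rw [← Finset.mul_sum]
    simp [hB.2, hA.2 i]

lemma rs_pow {n : ℕ} {A : Matrix (Fin n) (Fin n) ℝ} (hA : RowStochastic A) (t : ℕ) :
    RowStochastic (A ^ t) := by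
  induction t with
  | zero =>
    constructor
    · intro i j
      by_cases h : i = j <;> simp [Matrix.one_apply, h]
    · intro i
      simp [Matrix.one_apply]
  | succ t ih =>
    rw [pow_succ]
    exact rs_mul ih hA

lemma mulVec_le_sup' {n : ℕ} (hn : (Finset.univ : Finset (Fin n)).Nonempty)
    {B : Matrix (Fin n) (Fin n) ℝ} (hB : RowStochastic B) (v : Fin n → ℝ) (i : Fin n) :
    B.mulVec v i ≤ Finset.univ.sup' hn v := by
  have h : B.mulVec v i = ∑ j, B i j * v j := rfl
  rw [h]
  calc ∑ j, B i j * v j ≤ ∑ j, B i j * Finset.univ.sup' hn v :=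
        Finset.sum_le_sum fun j _ =>
          mul_le_mul_of_nonneg_left (Finset.le_sup' v (Finset.mem_univ j)) (hB.1 i j)
    _ = Finset.univ.sup' hn v := by rw [← Finset.sum_mul, hB.2 i, one_mul]

lemma inf'_le_mulVec {n : ℕ} (hn : (Finset.univ : Finset (Fin n)).Nonempty)
    {B : Matrix (Fin n) (Fin n) ℝ} (hB : RowStochastic B) (v : Fin n → ℝ) (i : Fin n) :
    Finset.univ.inf' hn v ≤ B.mulVec v i := by
  have h : B.mulVec v i = ∑ j, B i j * v j := rfl
  rw [h]
  calc Finset.univ.inf' hn v = ∑ j, B i j * Finset.univ.inf' hn v := by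
        rw [← Finset.sum_mul, hB.2 i, one_mul]
    _ ≤ ∑ j, B i j * v j :=
        Finset.sum_le_sum fun j _ =>
          mul_le_mul_of_nonneg_left (Finset.inf'_le v (Finset.mem_univ j)) (hB.1 i j)

lemma contraction {n : ℕ} (hn : (Finset.univ : Finset (Fin n)).Nonempty)
    {B : Matrix (Fin n) (Fin n) ℝ} (hB : RowStochastic B) {δ : ℝ} (hδ0 : 0 ≤ δ)
    {k : Fin n} (hδ : ∀ i, δ ≤ B i k) (v : Fin n → ℝ) :
    Finset.univ.sup' hn (B.mulVec v) - Finset.univ.inf' hn (B.mulVec v)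
      ≤ (1 - δ) * (Finset.univ.sup' hn v - Finset.univ.inf' hn v) := by
  set S := Finset.univ.sup' hn v with hS
  set m := Finset.univ.inf' hn v with hm
  have coeff_nonneg : ∀ i j, 0 ≤ B i j - if j = k then δ else 0 := by
    intro i j
    by_cases h : j = k
    · subst h; simp; linarith [hδ i]
    · simp [h]; exact hB.1 i j
  have coeff_sum : ∀ i, ∑ j, (B i j - if j = k then δ else 0) = 1 - δ := by
    intro i
    rw [Finset.sum_sub_distrib]
    simp [hB.2 i]
  have decomp : ∀ i, B.mulVec v i = δ * v k + ∑ j, (B i j - if j = k then δ else 0) * v j := by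
    intro i
    have h : B.mulVec v i = ∑ j, B i j * v j := rfl
    have h2 : ∑ j, (if j = k then δ else 0) * v j = δ * v k := by
      simp [Finset.sum_ite_eq']
    simp_rw [h, sub_mul]
    rw [Finset.sum_sub_distrib, h2]
    ring
  have hub : ∀ i, B.mulVec v i ≤ δ * v k + (1 - δ) * S := by
    intro i
    rw [decomp i]
    have : ∑ j, (B i j - if j = k then δ else 0) * v j
        ≤ ∑ j, (B i j - if j = k then δ else 0) * S :=
      Finset.sum_le_sum fun j _ =>
        mul_le_mul_of_nonneg_left (Finset.le_sup' v (Finset.mem_univ j)) (coeff_nonneg i j)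
    rw [← Finset.sum_mul, coeff_sum i] at this
    linarith
  have hlb : ∀ i, δ * v k + (1 - δ) * m ≤ B.mulVec v i := by
    intro i
    rw [decomp i]
    have : ∑ j, (B i j - if j = k then δ else 0) * m
        ≤ ∑ j, (B i j - if j = k then δ else 0) * v j :=
      Finset.sum_le_sum fun j _ =>
        mul_le_mul_of_nonneg_left (Finset.inf'_le v (Finset.mem_univ j)) (coeff_nonneg i j)
    rw [← Finset.sum_mul, coeff_sum i] at this
    linarith
  have h1 : Finset.univ.sup' hn (B.mulVec v) ≤ δ * v k + (1 - δ) * S :=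
    Finset.sup'_le hn _ fun i _ => hub i
  have h2 : δ * v k + (1 - δ) * m ≤ Finset.univ.inf' hn (B.mulVec v) :=
    Finset.le_inf' hn _ fun i _ => hlb i
  have h3 : (1 - δ) * (S - m) = (1 - δ) * S - (1 - δ) * m := by ring
  linarith

theorem stmt_10 {n : ℕ} (A : Matrix (Fin n) (Fin n) ℝ) (hA : RowStochastic A)
    (t₀ : ℕ) (k : Fin n) (hcol : ∀ i, 0 < (A ^ t₀) i k) :
    ∀ x : Fin n → ℝ, ∃ c : ℝ,
      Tendsto (fun t => (A ^ t).mulVec x) atTop (nhds (fun _ => c)) := by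
  intro x
  have hn : (Finset.univ : Finset (Fin n)).Nonempty := ⟨k, Finset.mem_univ k⟩
  set y : ℕ → Fin n → ℝ := fun t => (A ^ t).mulVec x with hy
  set Mf : ℕ → ℝ := fun t => Finset.univ.sup' hn (y t) with hMf
  set mf : ℕ → ℝ := fun t => Finset.univ.inf' hn (y t) with hmf
  have hpow : ∀ t, RowStochastic (A ^ t) := rs_pow hA
  have hstep : ∀ s t, y (t + s) = (A ^ s).mulVec (y t) := by
    intro s t
    simp only [hy]
    rw [show A ^ (t + s) = A ^ s * A ^ t by rw [← pow_add, add_comm], ← Matrix.mulVec_mulVec]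
  -- coordinate bounds
  have hcu : ∀ t i, y t i ≤ Mf t := fun t i => Finset.le_sup' (y t) (Finset.mem_univ i)
  have hcl : ∀ t i, mf t ≤ y t i := fun t i => Finset.inf'_le (y t) (Finset.mem_univ i)
  have hstepu : ∀ s t i, y (t + s) i ≤ Mf t := by
    intro s t i
    rw [hstep s t]
    exact mulVec_le_sup' hn (hpow s) (y t) i
  have hstepl : ∀ s t i, mf t ≤ y (t + s) i := by
    intro s t i
    rw [hstep s t]
    exact inf'_le_mulVec hn (hpow s) (y t) i
  have hM_anti : Antitone Mf := by
    apply antitone_nat_of_succ_le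
    intro t
    exact Finset.sup'_le hn _ fun i _ => hstepu 1 t i
  have hm_mono : Monotone mf := by
    apply monotone_nat_of_le_succ
    intro t
    exact Finset.le_inf' hn _ fun i _ => hstepl 1 t i
  have hmM : ∀ t, mf t ≤ Mf t := fun t => le_trans (hcl t k) (hcu t k)
  -- δ
  set δ : ℝ := Finset.univ.inf' hn (fun i => (A ^ t₀) i k) with hδdef
  have hδpos : 0 < δ := by
    rw [hδdef, Finset.lt_inf'_iff]
    exact fun i _ => hcol i
  have hδle : ∀ i, δ ≤ (A ^ t₀) i k := fun i => Finset.inf'_le _ (Finset.mem_univ i)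
  have hδ1 : δ ≤ 1 := by
    have h1 : (A ^ t₀) k k ≤ ∑ j, (A ^ t₀) k j :=
      Finset.single_le_sum (fun j _ => (hpow t₀).1 k j) (Finset.mem_univ k)
    have h2 := (hpow t₀).2 k
    linarith [hδle k]
  -- gap contraction along multiples of t₀
  have hgap : ∀ s, Mf (s * t₀) - mf (s * t₀) ≤ (1 - δ) ^ s * (Mf 0 - mf 0) := by
    intro s
    induction s with
    | zero => simp
    | succ s ih =>
      have heq : (s + 1) * t₀ = s * t₀ + t₀ := by ring
      have hc := contraction hn (hpow t₀) hδpos.le hδle (y (s * t₀))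
      rw [← hstep t₀ (s * t₀)] at hc
      calc Mf ((s + 1) * t₀) - mf ((s + 1) * t₀)
          = Mf (s * t₀ + t₀) - mf (s * t₀ + t₀) := by rw [heq]
        _ ≤ (1 - δ) * (Mf (s * t₀) - mf (s * t₀)) := hc
        _ ≤ (1 - δ) * ((1 - δ) ^ s * (Mf 0 - mf 0)) :=
            mul_le_mul_of_nonneg_left ih (by linarith)
        _ = (1 - δ) ^ (s + 1) * (Mf 0 - mf 0) := by ring
  -- gap tends to 0
  have hgap_anti : Antitone (fun t => Mf t - mf t) := fun s t h =>
    sub_le_sub (hM_anti h) (hm_mono h)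
  have hgap_nonneg : ∀ t, 0 ≤ Mf t - mf t := fun t => sub_nonneg.2 (hmM t)
  have hbdd : BddBelow (Set.range fun t => Mf t - mf t) := by
    refine ⟨0, ?_⟩
    rintro z ⟨t, rfl⟩
    exact hgap_nonneg t
  have hgconv : Tendsto (fun t => Mf t - mf t) atTop (nhds (⨅ t, Mf t - mf t)) :=
    tendsto_atTop_ciInf hgap_anti hbdd
  set L : ℝ := ⨅ t, Mf t - mf t with hLdef
  have hL0 : 0 ≤ L := le_ciInf fun t => hgap_nonneg t
  have hpow0 : Tendsto (fun s => (1 - δ) ^ s * (Mf 0 - mf 0)) atTop (nhds 0) := by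
    have := (tendsto_pow_atTop_nhds_zero_of_lt_one (by linarith) (by linarith : (1:ℝ) - δ < 1)).mul_const (Mf 0 - mf 0)
    simpa using this
  have hLle : L ≤ 0 := by
    refine ge_of_tendsto hpow0 (Eventually.of_forall fun s => ?_)
    exact le_trans (ciInf_le hbdd (s * t₀)) (hgap s)
  have hLeq : L = 0 := le_antisymm hLle hL0
  rw [hLeq] at hgconv
  -- convergence of mf
  have hm_bdd : BddAbove (Set.range mf) := by
    refine ⟨Mf 0, ?_⟩
    rintro z ⟨t, rfl⟩
    exact le_trans (hmM t) (hM_anti (Nat.zero_le t))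
  have hmc : Tendsto mf atTop (nhds (⨆ t, mf t)) := tendsto_atTop_ciSup hm_mono hm_bdd
  set c : ℝ := ⨆ t, mf t with hcdef
  have hMc : Tendsto Mf atTop (nhds c) := by
    have := hgconv.add hmc
    simp only [zero_add, sub_add_cancel] at this
    exact this
  refine ⟨c, ?_⟩
  rw [tendsto_pi_nhds]
  intro i
  exact tendsto_of_tendsto_of_tendsto_of_le_of_le hmc hMc (fun t => hcl t i) (fun t => hcu t i)
end
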